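/- With the Bedford-McMullen setup where $\psi$ is monotone decreasing on $[h_r(\underline{p}_D), \log R]$: for every $z \in [h_r(\underline{p}_D), \log R]$ and every $\varepsilon > 0$ there exists $N_0$ such that for all $n \geq N_0$, $\#\{\overline{\imath} \in Q^n : h_r(\overline{\imath}) \geq z\} \leq e^{n(\psi(z) + \varepsilon)}$. -/

import Mathlib

open Real Finset

lemma aux_entropy_le_log_card {α : Type*} [Fintype α] [Nonempty α] (p : α → ℝ)
    (h0 : ∀ q, 0 ≤ p q) (h1 : ∑ q, p q = 1) :
    -∑ q, p q * Real.log (p q) ≤ Real.log (Fintype.card α) := by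
  have hD : (0:ℝ) < (Fintype.card α : ℝ) := by exact_mod_cast Fintype.card_pos
  set c : ℝ := (Fintype.card α : ℝ)⁻¹ with hc_def
  have hc : 0 < c := by positivity
  have hJ := Real.concaveOn_negMulLog.le_map_sum (t := Finset.univ)
      (w := fun _ : α => c) (p := p)
      (fun i _ => hc.le)
      (by rw [Finset.sum_const, nsmul_eq_mul, hc_def]; field_simp; simp)
      (fun i _ => h0 i)
  simp only [smul_eq_mul] at hJ
  rw [← Finset.mul_sum, ← Finset.mul_sum, h1, mul_one] at hJ
  have hnc : Real.negMulLog c = c * Real.log (Fintype.card α) := by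
    simp only [Real.negMulLog, hc_def, Real.log_inv]; ring
  rw [hnc] at hJ
  have hH : ∑ i : α, Real.negMulLog (p i) = -∑ q, p q * Real.log (p q) := by
    simp [Real.negMulLog]
  rw [hH] at hJ
  exact le_of_mul_le_mul_left hJ hc

lemma aux_count_type_le {α : Type*} [Fintype α] [DecidableEq α] {n : ℕ} (hn : 0 < n)
    (m : α → ℕ) (hm : ∑ q, m q = n) :
    ((Finset.univ.filter (fun w : Fin n → α =>
        ∀ q, (Finset.univ.filter (fun k => w k = q)).card = m q)).card : ℝ)
      ≤ Real.exp (-∑ q, (m q : ℝ) * Real.log ((m q : ℝ) / n)) := by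
  have hn' : (0:ℝ) < n := by exact_mod_cast hn
  set p : α → ℝ := fun q => (m q : ℝ) / n with hp_def
  have hp0 : ∀ q, 0 ≤ p q := fun q => by positivity
  have hp1 : ∑ q, p q = 1 := by
    rw [hp_def, ← Finset.sum_div,
      show ∑ q, ((m q : ℝ)) = (n:ℝ) by exact_mod_cast congrArg Nat.cast hm]
    field_simp
  set T := Finset.univ.filter (fun w : Fin n → α =>
      ∀ q, (Finset.univ.filter (fun k => w k = q)).card = m q) with hT
  set C : ℝ := ∏ q, p q ^ m q with hC
  have key : ∑ w : Fin n → α, ∏ k, p (w k) = 1 := by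
    rw [← Fintype.sum_pow p n, hp1, one_pow]
  have heach : ∀ w ∈ T, ∏ k, p (w k) = C := by
    intro w hw
    rw [hT, Finset.mem_filter] at hw
    have h2 := hw.2
    rw [hC, Finset.prod_comp p w]
    simp only [h2]
    refine Finset.prod_subset (Finset.subset_univ _) ?_
    intro q _ hq
    have hz : m q = 0 := by
      rw [← h2 q, Finset.card_eq_zero, Finset.filter_eq_empty_iff]
      intro k _ hk
      exact hq (Finset.mem_image.2 ⟨k, Finset.mem_univ k, hk⟩)
    rw [hz, pow_zero]
  have hle : (T.card : ℝ) * C ≤ 1 := by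
    calc (T.card : ℝ) * C = ∑ w ∈ T, ∏ k, p (w k) := by
          rw [Finset.sum_congr rfl heach, Finset.sum_const, nsmul_eq_mul]
      _ ≤ ∑ w : Fin n → α, ∏ k, p (w k) := by
          apply Finset.sum_le_sum_of_subset_of_nonneg (Finset.subset_univ _)
          intro w _ _
          exact Finset.prod_nonneg fun k _ => hp0 _
      _ = 1 := key
  have hCE : C * Real.exp (-∑ q, (m q : ℝ) * Real.log ((m q : ℝ) / n)) = 1 := by
    rw [show (-∑ q, (m q : ℝ) * Real.log ((m q : ℝ) / n))
        = ∑ q, -((m q : ℝ) * Real.log (p q)) by rw [← Finset.sum_neg_distrib],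
      Real.exp_sum, hC, ← Finset.prod_mul_distrib]
    apply Finset.prod_eq_one
    intro q _
    rcases Nat.eq_zero_or_pos (m q) with h | h
    · simp [h]
    · have hpq : 0 < p q := by
        rw [hp_def]; positivity
      rw [show -((m q : ℝ) * Real.log (p q)) = (m q : ℝ) * (-Real.log (p q)) by ring,
        ← Real.log_inv, Real.exp_nat_mul, Real.exp_log (by positivity), ← mul_pow,
        mul_inv_cancel₀ hpq.ne', one_pow]
  have hC0 : 0 < Real.exp (-∑ q, (m q : ℝ) * Real.log ((m q : ℝ) / n)) := Real.exp_pos _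
  calc (T.card : ℝ) = ((T.card : ℝ) * C) * Real.exp (-∑ q, (m q : ℝ) * Real.log ((m q : ℝ) / n)) := by
        rw [mul_assoc, hCE, mul_one]
    _ ≤ 1 * Real.exp (-∑ q, (m q : ℝ) * Real.log ((m q : ℝ) / n)) := by
        apply mul_le_mul_of_nonneg_right hle hC0.le
    _ = _ := one_mul _

theorem stmt15 (S : Type*) [Fintype S] [Nonempty S] [DecidableEq S] (P : S → Type*) [∀ a, Fintype (P a)]
    [∀ a, Nonempty (P a)]
    (ψ : ℝ → ℝ)
    (hψdef : ∀ z : ℝ, ψ z = sSup {x : ℝ | ∃ p : (Σ a : S, P a) → ℝ, (∀ q, 0 ≤ p q) ∧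
      (∑ q : (Σ a : S, P a), p q) = 1 ∧
      (-∑ a : S, (∑ b : P a, p ⟨a, b⟩) * Real.log (∑ b : P a, p ⟨a, b⟩)) = z ∧
      x = -∑ q : (Σ a : S, P a), p q * Real.log (p q)})
    (hψmono : AntitoneOn ψ
      (Set.Icc
        (-∑ a : S, ((Fintype.card (P a) : ℝ) / (Fintype.card (Σ a' : S, P a') : ℝ)) *
          Real.log ((Fintype.card (P a) : ℝ) / (Fintype.card (Σ a' : S, P a') : ℝ)))
        (Real.log (Fintype.card S))))
    (z : ℝ)
    (hz : z ∈ Set.Icc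
      (-∑ a : S, ((Fintype.card (P a) : ℝ) / (Fintype.card (Σ a' : S, P a') : ℝ)) *
        Real.log ((Fintype.card (P a) : ℝ) / (Fintype.card (Σ a' : S, P a') : ℝ)))
      (Real.log (Fintype.card S)))
    (ε : ℝ) (hε : 0 < ε) :
    ∃ N₀ : ℕ, ∀ n : ℕ, N₀ ≤ n →
      (Nat.card {w : Fin n → (Σ a : S, P a) //
          z ≤ -∑ a : S,
            (((Finset.univ.filter (fun k : Fin n => (w k).1 = a)).card : ℝ) / n) *
              Real.log (((Finset.univ.filter (fun k : Fin n => (w k).1 = a)).card : ℝ) / n)}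
        : ℝ) ≤ Real.exp (n * (ψ z + ε)) := by
  classical
  have hQne : Nonempty (Σ a : S, P a) := ⟨⟨Classical.arbitrary S, Classical.arbitrary _⟩⟩
  set Dr : ℝ := (Fintype.card (Σ a : S, P a) : ℝ) with hDr_def
  have hDrpos : 0 < Dr := by
    rw [hDr_def]; exact_mod_cast Fintype.card_pos
  -- choose N₁ from log n / n → 0
  have hlim : Filter.Tendsto (fun n : ℕ => Real.log n / n) Filter.atTop (nhds 0) := by
    have h1 : Filter.Tendsto (fun x : ℝ => Real.log x / x) Filter.atTop (nhds 0) :=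
      Real.isLittleO_log_id_atTop.tendsto_div_nhds_zero
    exact h1.comp tendsto_natCast_atTop_atTop
  have hev : ∀ᶠ n : ℕ in Filter.atTop, Real.log n / n < ε / (2 * Dr + 2) :=
    hlim.eventually_lt_const (by positivity)
  obtain ⟨N₁, hN₁⟩ := Filter.eventually_atTop.mp hev
  refine ⟨max N₁ 2, fun n hn => ?_⟩
  have hn2 : 2 ≤ n := le_trans (le_max_right _ _) hn
  have hn0 : 0 < n := lt_of_lt_of_le (by norm_num) hn2
  have hn' : (0:ℝ) < n := by exact_mod_cast hn0
  have hnN₁ : N₁ ≤ n := le_trans (le_max_left _ _) hn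
  -- (n+1)^D ≤ exp (n ε)
  have hcount : ((n + 1 : ℝ)) ^ (Fintype.card (Σ a : S, P a)) ≤ Real.exp (n * ε) := by
    have hlogn : 0 ≤ Real.log n := Real.log_nonneg (by exact_mod_cast hn0)
    have hlog1 : Real.log (n + 1 : ℝ) ≤ 2 * Real.log n := by
      rw [show (2:ℝ) * Real.log n = Real.log ((n:ℝ)^2) by rw [Real.log_pow]; push_cast; ring]
      apply Real.log_le_log (by positivity)
      have : (n:ℝ) * 2 ≤ (n:ℝ) * n := by
        apply mul_le_mul_of_nonneg_left (by exact_mod_cast hn2) hn'.le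
      nlinarith
    have hlogn2 : Real.log n < n * (ε / (2 * Dr + 2)) := by
      have := hN₁ n hnN₁
      rw [div_lt_iff₀ hn'] at this
      linarith
    have hDlog : Dr * Real.log (n + 1 : ℝ) ≤ n * ε := by
      have h1 : Dr * Real.log (n+1:ℝ) ≤ Dr * (2 * Real.log n) :=
        mul_le_mul_of_nonneg_left hlog1 hDrpos.le
      have h2 : Dr * (2 * Real.log n) ≤ Dr * (2 * (n * (ε / (2 * Dr + 2)))) := by
        apply mul_le_mul_of_nonneg_left _ hDrpos.le
        apply mul_le_mul_of_nonneg_left hlogn2.le (by norm_num)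
      have h3 : Dr * (2 * (n * (ε / (2 * Dr + 2)))) ≤ n * ε := by
        rw [div_eq_mul_inv]
        have hpos : (0:ℝ) < 2 * Dr + 2 := by positivity
        rw [show Dr * (2 * ((n:ℝ) * (ε * (2 * Dr + 2)⁻¹))) =
            ((n:ℝ) * ε) * ((2 * Dr) * (2 * Dr + 2)⁻¹) by ring]
        have hfrac : (2 * Dr) * (2 * Dr + 2)⁻¹ ≤ 1 := by
          rw [← div_eq_mul_inv, div_le_one hpos]; linarith
        nlinarith [mul_nonneg hn'.le hε.le]
      linarith
    have : ((n + 1 : ℝ)) ^ (Fintype.card (Σ a : S, P a))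
        = Real.exp (Dr * Real.log (n + 1 : ℝ)) := by
      rw [hDr_def, Real.exp_nat_mul, Real.exp_log (by positivity)]
    rw [this]
    exact Real.exp_le_exp.mpr hDlog
  
  -- the main counting argument
  set cond : (Fin n → (Σ a : S, P a)) → Prop := fun w => z ≤ -∑ a : S,
      (((Finset.univ.filter (fun k : Fin n => (w k).1 = a)).card : ℝ) / n) *
        Real.log (((Finset.univ.filter (fun k : Fin n => (w k).1 = a)).card : ℝ) / n)
    with hcond_def
  set typeOf : (Fin n → (Σ a : S, P a)) → ((Σ a : S, P a) → ℕ) :=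
    fun w q => (Finset.univ.filter (fun k => w k = q)).card with htype_def
  set piF := Fintype.piFinset (fun _ : (Σ a : S, P a) => Finset.range (n+1)) with hpiF_def
  have hcard : Nat.card {w // cond w} = (univ.filter cond).card := by
    rw [Nat.card_eq_fintype_card, Fintype.card_subtype]
  have hgroup : (univ.filter cond).card
      = ∑ m ∈ piF, ((univ.filter cond).filter (fun w => typeOf w = m)).card := by
    apply Finset.card_eq_sum_card_fiberwise
    intro w _
    rw [hpiF_def, Finset.mem_coe, Fintype.mem_piFinset]
    intro q
    rw [Finset.mem_range]
    refine Nat.lt_succ_of_le (le_trans (Finset.card_filter_le _ _) ?_)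
    simp
  have hfiber : ∀ m ∈ piF,
      ((((univ.filter cond).filter (fun w => typeOf w = m)).card : ℝ)) ≤ Real.exp (n * ψ z) := by
    intro m _
    rcases Finset.eq_empty_or_nonempty ((univ.filter cond).filter (fun w => typeOf w = m)) with
      he | ⟨w, hw⟩
    · rw [he]
      simp [(Real.exp_pos _).le]
    · rw [Finset.mem_filter, Finset.mem_filter] at hw
      obtain ⟨⟨-, hcondw⟩, htw⟩ := hw
      have hmn : ∑ q, m q = n := by
        rw [← htw]
        have h := (Finset.card_eq_sum_card_fiberwise
          (f := w) (s := (univ : Finset (Fin n))) (t := univ) (fun x _ => Finset.mem_univ _))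
        rw [Finset.card_univ, Fintype.card_fin] at h
        exact h.symm
      have hsub : ((univ.filter cond).filter (fun w' => typeOf w' = m)) ⊆
          univ.filter (fun w' : Fin n → (Σ a : S, P a) =>
            ∀ q, (univ.filter (fun k => w' k = q)).card = m q) := by
        intro w' hw'
        rw [Finset.mem_filter] at hw' ⊢
        exact ⟨Finset.mem_univ _, fun q => congrFun hw'.2 q⟩
      have hb1 : ((((univ.filter cond).filter (fun w' => typeOf w' = m)).card : ℝ))
          ≤ Real.exp (-∑ q, (m q : ℝ) * Real.log ((m q : ℝ)/n)) :=
        le_trans (by exact_mod_cast Finset.card_le_card hsub) (aux_count_type_le hn0 m hmn)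
      refine le_trans hb1 (Real.exp_le_exp.mpr ?_)
      set p : (Σ a : S, P a) → ℝ := fun q => (m q : ℝ)/n with hp_def
      have hp0 : ∀ q, 0 ≤ p q := fun q => by positivity
      have hp1 : ∑ q, p q = 1 := by
        rw [hp_def, ← Finset.sum_div,
          show (∑ q, ((m q:ℝ))) = (n:ℝ) by exact_mod_cast congrArg Nat.cast hmn]
        field_simp
      have hrw : -∑ q, (m q : ℝ) * Real.log ((m q : ℝ)/n)
          = (n : ℝ) * (-∑ q, p q * Real.log (p q)) := by
        rw [mul_neg, Finset.mul_sum]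
        congr 1
        apply Finset.sum_congr rfl
        intro q _
        have hmq : (n:ℝ) * ((m q:ℝ)/n) = (m q:ℝ) := by field_simp
        calc (m q : ℝ) * Real.log ((m q : ℝ)/n)
            = ((n:ℝ) * ((m q:ℝ)/n)) * Real.log ((m q:ℝ)/n) := by rw [hmq]
          _ = (n:ℝ) * (p q * Real.log (p q)) := by rw [mul_assoc]
      rw [hrw]
      apply mul_le_mul_of_nonneg_left _ hn'.le
      -- entropy of p is at most ψ z
      have hrowcount : ∀ a : S, ∑ b : P a, m ⟨a,b⟩
          = (univ.filter (fun k : Fin n => (w k).1 = a)).card := by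
        intro a
        have h1 : (univ.filter (fun k : Fin n => (w k).1 = a)).card
            = ∑ q : (Σ a : S, P a),
              ((univ.filter (fun k : Fin n => (w k).1 = a)).filter (fun k => w k = q)).card :=
          Finset.card_eq_sum_card_fiberwise (fun x _ => Finset.mem_univ _)
        have h2 : ∀ q : (Σ a : S, P a),
            ((univ.filter (fun k : Fin n => (w k).1 = a)).filter (fun k => w k = q)).card
              = if q.1 = a then m q else 0 := by
          intro q
          by_cases hq : q.1 = a
          · rw [if_pos hq, ← congrFun htw q]
            show _ = (univ.filter (fun k => w k = q)).card
            congr 1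
            ext k
            simp only [Finset.mem_filter, Finset.mem_univ, true_and]
            constructor
            · rintro ⟨-, h⟩; exact h
            · intro h; exact ⟨by rw [h]; exact hq, h⟩
          · rw [if_neg hq, Finset.card_eq_zero, Finset.filter_eq_empty_iff]
            intro k hk
            rw [Finset.mem_filter] at hk
            intro hwk
            exact hq (by rw [← hwk]; exact hk.2)
        have h3 : (univ.filter (fun k : Fin n => (w k).1 = a)).card
            = ∑ q ∈ Finset.univ.filter (fun q : Σ a : S, P a => q.1 = a), m q := by
          rw [h1, Finset.sum_congr rfl (fun q _ => h2 q), Finset.sum_filter]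
        have hset : Finset.univ.filter (fun q : Σ a : S, P a => q.1 = a)
            = ({a} : Finset S).sigma (fun a' => (univ : Finset (P a'))) := by
          ext ⟨a', b⟩
          simp [Finset.mem_sigma]
        rw [h3, hset, Finset.sum_sigma, Finset.sum_singleton]
      have hrowp : ∀ a : S, (∑ b : P a, p ⟨a,b⟩)
          = ((univ.filter (fun k : Fin n => (w k).1 = a)).card : ℝ)/n := by
        intro a
        rw [hp_def, ← Finset.sum_div]
        congr 1
        exact_mod_cast congrArg Nat.cast (hrowcount a)
      set z' : ℝ := -∑ a : S, (∑ b : P a, p ⟨a,b⟩) * Real.log (∑ b : P a, p ⟨a,b⟩) with hz'_def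
      have hzz' : z ≤ z' := by
        rw [hz'_def]
        simp only [hrowp]
        rw [hcond_def] at hcondw
        exact hcondw
      have hz'top : z' ≤ Real.log (Fintype.card S) := by
        rw [hz'_def]
        apply aux_entropy_le_log_card (fun a => ∑ b : P a, p ⟨a,b⟩)
        · intro a
          exact Finset.sum_nonneg fun b _ => hp0 _
        · rw [← hp1, ← Finset.univ_sigma_univ, Finset.sum_sigma]
      have hbdd : BddAbove {x : ℝ | ∃ p' : (Σ a : S, P a) → ℝ, (∀ q, 0 ≤ p' q) ∧
          (∑ q : (Σ a : S, P a), p' q) = 1 ∧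
          (-∑ a : S, (∑ b : P a, p' ⟨a, b⟩) * Real.log (∑ b : P a, p' ⟨a, b⟩)) = z' ∧
          x = -∑ q : (Σ a : S, P a), p' q * Real.log (p' q)} := by
        refine ⟨Real.log (Fintype.card (Σ a : S, P a)), ?_⟩
        rintro x ⟨p', h0', h1', -, hx⟩
        rw [hx]
        exact aux_entropy_le_log_card p' h0' h1'
      have hmem : (-∑ q, p q * Real.log (p q)) ∈ {x : ℝ | ∃ p' : (Σ a : S, P a) → ℝ,
          (∀ q, 0 ≤ p' q) ∧ (∑ q : (Σ a : S, P a), p' q) = 1 ∧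
          (-∑ a : S, (∑ b : P a, p' ⟨a, b⟩) * Real.log (∑ b : P a, p' ⟨a, b⟩)) = z' ∧
          x = -∑ q : (Σ a : S, P a), p' q * Real.log (p' q)} :=
        ⟨p, hp0, hp1, hz'_def.symm, rfl⟩
      calc -∑ q, p q * Real.log (p q) ≤ ψ z' := by
            rw [hψdef z']
            exact le_csSup hbdd hmem
        _ ≤ ψ z := hψmono hz (Set.mem_Icc.mpr ⟨le_trans hz.1 hzz', hz'top⟩) hzz'
  have hpiFcard : ((piF.card : ℝ)) = ((n:ℝ) + 1) ^ (Fintype.card (Σ a : S, P a)) := by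
    rw [hpiF_def, Fintype.card_piFinset]
    simp
  calc (Nat.card {w // cond w} : ℝ)
      = ((univ.filter cond).card : ℝ) := by exact_mod_cast congrArg Nat.cast hcard
    _ = ∑ m ∈ piF, ((((univ.filter cond).filter (fun w => typeOf w = m)).card : ℝ)) := by
        rw [hgroup]
        push_cast
        rfl
    _ ≤ ∑ _m ∈ piF, Real.exp ((n:ℝ) * ψ z) := Finset.sum_le_sum hfiber
    _ = (piF.card : ℝ) * Real.exp ((n:ℝ) * ψ z) := by
        rw [Finset.sum_const, nsmul_eq_mul]
    _ ≤ Real.exp ((n:ℝ) * ε) * Real.exp ((n:ℝ) * ψ z) := by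
        apply mul_le_mul_of_nonneg_right _ (Real.exp_pos _).le
        rw [hpiFcard]
        exact hcount
    _ = Real.exp ((n:ℝ) * (ψ z + ε)) := by
        rw [← Real.exp_add]
        ring_nf
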